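/- Let β > 0, ω ≥ 0, γ ≥ 0 with p_ω = ω/(β+ω), and let f_D be the PGF of a degree distribution with mean μ_D ∈ (0,∞). Suppose θ : [0,∞) → [0,1] satisfies the ODE dθ/dt = β f_D'(θ)/μ_D − (β+γ+ω)θ + γ + ω with θ(0) = 1. Suppose ξ : [0,∞) → [0,∞) satisfies ξ(0)=0 and dξ/dt = 1 + (γ/(β+ω))(1 − e^{(β+ω)ξ}) − e^{(β+ω)ξ} f_D'(ψ(ξ))/μ_D, where ψ(u) = p_ω + (1−p_ω) e^{-(β+ω)u}. Then θ(t) = ψ(ξ(t)) for all t ≥ 0 (assuming uniqueness of solutions to the θ-ODE). -/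

import Mathlib

open Real

/-- If `θ` solves the edge-based-compartmental ODE
`θ' = β f_D'(θ)/μ_D − (β+γ+ω)θ + γ + ω`, `θ(0) = 1`, and `ξ` solves the
time-transformation ODE `ξ' = 1 + (γ/(β+ω))(1 − e^{(β+ω)ξ}) − e^{(β+ω)ξ} f_D'(ψ(ξ))/μ_D`,
`ξ(0) = 0`, with `ψ(u) = p_ω + (1−p_ω)e^{-(β+ω)u}`, then (assuming uniqueness
of solutions of the `θ`-ODE) `θ(t) = ψ(ξ(t))` for all `t ≥ 0`. -/
theorem stmt_16 (β ω γ : ℝ) (hβ : 0 < β) (hω : 0 ≤ ω) (hγ : 0 ≤ γ)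
    (pω : ℝ) (hpω : pω = ω / (β + ω))
    (p : ℕ → ℝ) (hp : ∀ k, 0 ≤ p k) (hp1 : ∑' k : ℕ, p k = 1)
    (fD : ℝ → ℝ) (hfD : ∀ s, fD s = ∑' k : ℕ, p k * s ^ k)
    (μD : ℝ) (hμD : μD = ∑' k : ℕ, (k : ℝ) * p k) (hμpos : 0 < μD)
    (ψ : ℝ → ℝ) (hψ : ∀ u, ψ u = pω + (1 - pω) * exp (-(β + ω) * u))
    (θ : ℝ → ℝ) (hθ0 : θ 0 = 1)
    (hθmem : ∀ t, 0 ≤ t → θ t ∈ Set.Icc (0 : ℝ) 1)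
    (hθode : ∀ t, 0 ≤ t →
      HasDerivAt θ (β * deriv fD (θ t) / μD - (β + γ + ω) * θ t + γ + ω) t)
    (ξ : ℝ → ℝ) (hξ0 : ξ 0 = 0) (hξnn : ∀ t, 0 ≤ t → 0 ≤ ξ t)
    (hξode : ∀ t, 0 ≤ t →
      HasDerivAt ξ (1 + γ / (β + ω) * (1 - exp ((β + ω) * ξ t))
        - exp ((β + ω) * ξ t) * deriv fD (ψ (ξ t)) / μD) t)
    (huniq : ∀ θ₁ θ₂ : ℝ → ℝ, θ₁ 0 = 1 → θ₂ 0 = 1 →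
      (∀ t, 0 ≤ t →
        HasDerivAt θ₁ (β * deriv fD (θ₁ t) / μD - (β + γ + ω) * θ₁ t + γ + ω) t) →
      (∀ t, 0 ≤ t →
        HasDerivAt θ₂ (β * deriv fD (θ₂ t) / μD - (β + γ + ω) * θ₂ t + γ + ω) t) →
      ∀ t, 0 ≤ t → θ₁ t = θ₂ t) :
    ∀ t, 0 ≤ t → θ t = ψ (ξ t) := by
  have hβω : (0:ℝ) < β + ω := by linarith
  have hβω' : (β + ω) ≠ 0 := ne_of_gt hβω
  have hμ : μD ≠ 0 := ne_of_gt hμpos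
  have hψfun : ψ = fun u => pω + (1 - pω) * exp (-(β + ω) * u) := funext hψ
  have hψder : ∀ u : ℝ, HasDerivAt ψ ((1 - pω) * (exp (-(β + ω) * u) * (-(β + ω)))) u := by
    intro u
    rw [hψfun]
    simpa using ((((hasDerivAt_id u).const_mul (-(β + ω))).exp).const_mul (1 - pω)).const_add pω
  have hφ0 : ψ (ξ 0) = 1 := by
    rw [hξ0, hψ]; simp
  have hφode : ∀ t, 0 ≤ t →
      HasDerivAt (fun t => ψ (ξ t))
        (β * deriv fD (ψ (ξ t)) / μD - (β + γ + ω) * ψ (ξ t) + γ + ω) t := by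
    intro t ht
    have h := (hψder (ξ t)).comp t (hξode t ht)
    refine h.congr_deriv ?_
    rw [hψ, hpω, neg_mul, Real.exp_neg]
    field_simp
    ring
  exact huniq θ (fun t => ψ (ξ t)) hθ0 hφ0 hθode hφode
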